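/- For all x, y ∈ R, the standard inner product of the Gray images, ⟨Φ(x), Φ(y)⟩ = Σ_{j=0}^{2} Φ(x)_j · Φ(y)_j ∈ ZMod 2, equals the coefficient of u² in the product x·y when x·y is written in the basis {1, u, u²}; in particular, if x·y = 0 in R then ⟨Φ(x), Φ(y)⟩ = 0. -/

import Mathlib

open Polynomial

noncomputable section

/-- The ring `R = F₂ + uF₂ + u²F₂` with `u³ = u`, realized as `(ZMod 2)[X] ⧸ ⟨X³ - X⟩`. -/
abbrev R : Type := Polynomial (ZMod 2) ⧸ Ideal.span ({X ^ 3 - X} : Set (Polynomial (ZMod 2)))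

/-- `u` is the residue class of `X` in `R`. -/
def u : R := Ideal.Quotient.mk _ (X : Polynomial (ZMod 2))

/-- The element `a + u·b + u²·c` of `R`. -/
def elt (a b c : ZMod 2) : R :=
  algebraMap (ZMod 2) R a + algebraMap (ZMod 2) R b * u + algebraMap (ZMod 2) R c * u ^ 2

/-- `Φ` is the Gray map: `Φ(a + u·b + u²·c) = (a, a + c, b)`. -/
def GraySpec (Φ : R → Fin 3 → ZMod 2) : Prop :=
  ∀ a b c : ZMod 2, Φ (elt a b c) = ![a, a + c, b]

lemma hu3 : u ^ 3 = u := by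
  have h : (Ideal.Quotient.mk (Ideal.span ({X ^ 3 - X} : Set (Polynomial (ZMod 2))))) (X ^ 3 - X) = 0 :=
    Ideal.Quotient.eq_zero_iff_mem.mpr (Ideal.subset_span rfl)
  have := sub_eq_zero.mp (by simpa [map_sub, map_pow] using h)
  simpa [u] using this

lemma smul_eq' (a : ZMod 2) (x : R) : a • x = algebraMap (ZMod 2) R a * x := by
  obtain ⟨p, rfl⟩ := Ideal.Quotient.mk_surjective x
  have h1 : a • (Ideal.Quotient.mk (Ideal.span ({X ^ 3 - X} : Set (Polynomial (ZMod 2))))) p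
      = (Ideal.Quotient.mk (Ideal.span ({X ^ 3 - X} : Set (Polynomial (ZMod 2))))) (a • p) := rfl
  have h2 : algebraMap (ZMod 2) R a
      = (Ideal.Quotient.mk (Ideal.span ({X ^ 3 - X} : Set (Polynomial (ZMod 2))))) (C a) := rfl
  rw [h1, h2, ← map_mul, smul_eq_C_mul]

lemma monic3 : (X ^ 3 - X : Polynomial (ZMod 2)).Monic := by
  have h3 : (3:ℕ) = 2 + 1 := rfl
  rw [h3]
  exact Polynomial.monic_X_pow_sub (by simpa using Polynomial.degree_X_le)

def pb : PowerBasis (ZMod 2) R := AdjoinRoot.powerBasis' monic3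

lemma hdim : pb.dim = 3 := by
  show (X ^ 3 - X : Polynomial (ZMod 2)).natDegree = 3
  compute_degree!

def B : Module.Basis (Fin 3) (ZMod 2) R := pb.basis.reindex (finCongr hdim)

lemma hB (j : Fin 3) : B j = u ^ (j : ℕ) := by
  rw [B, Module.Basis.reindex_apply, pb.basis_eq_pow]
  rfl

lemma elt_eq (a b c : ZMod 2) : elt a b c = B.equivFun.symm ![a, b, c] := by
  rw [Module.Basis.equivFun_symm_apply, Fin.sum_univ_three]
  simp only [hB, Matrix.cons_val_zero, Matrix.cons_val_one, Matrix.head_cons,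
    Matrix.cons_val_two, Matrix.tail_cons, smul_eq']
  simp [elt]

lemma elt_inj {a b c a' b' c' : ZMod 2} (h : elt a b c = elt a' b' c') :
    a = a' ∧ b = b' ∧ c = c' := by
  rw [elt_eq, elt_eq] at h
  have := B.equivFun.symm.injective h
  exact ⟨congrFun this 0, congrFun this 1, congrFun this 2⟩

lemma elt_surj (x : R) : ∃ a b c, x = elt a b c := by
  refine ⟨B.equivFun x 0, B.equivFun x 1, B.equivFun x 2, ?_⟩
  rw [elt_eq]
  refine (B.equivFun.symm_apply_eq.mpr ?_).symm
  funext j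
  fin_cases j <;> rfl

lemma elt_mul (a b c d e f : ZMod 2) :
    elt a b c * elt d e f =
      elt (a*d) (a*e + b*d + b*f + c*e) (a*f + b*e + c*d + c*f) := by
  simp only [elt, map_add, map_mul]
  linear_combination (algebraMap (ZMod 2) R b * algebraMap (ZMod 2) R f
    + algebraMap (ZMod 2) R c * algebraMap (ZMod 2) R e
    + algebraMap (ZMod 2) R c * algebraMap (ZMod 2) R f * u) * hu3

lemma elt_zero : elt 0 0 0 = 0 := by simp [elt]

/-- The inner product `⟨Φ(x), Φ(y)⟩` equals the coefficient of `u²` in `x·y` written in the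
basis `{1, u, u²}`; in particular `x·y = 0` implies `⟨Φ(x), Φ(y)⟩ = 0`. -/
theorem gray_inner_eq_u_sq_coeff (Φ : R → Fin 3 → ZMod 2) (hΦ : GraySpec Φ) :
    (∀ x y : R, ∀ a b c : ZMod 2, x * y = elt a b c → ∑ j, Φ x j * Φ y j = c) ∧
    (∀ x y : R, x * y = 0 → ∑ j, Φ x j * Φ y j = 0) := by
  have main : ∀ x y : R, ∀ a b c : ZMod 2, x * y = elt a b c → ∑ j, Φ x j * Φ y j = c := by
    intro x y a b c hxy
    obtain ⟨a₁, b₁, c₁, rfl⟩ := elt_surj x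
    obtain ⟨a₂, b₂, c₂, rfl⟩ := elt_surj y
    rw [elt_mul] at hxy
    obtain ⟨-, -, hc⟩ := elt_inj hxy
    rw [hΦ, hΦ, Fin.sum_univ_three]
    simp only [Matrix.cons_val_zero, Matrix.cons_val_one, Matrix.head_cons,
      Matrix.cons_val_two, Matrix.tail_cons]
    rw [← hc]
    ring_nf
    linear_combination (a₁ * a₂) * (by decide : (2 : ZMod 2) = 0)
  exact ⟨main, fun x y h => main x y 0 0 0 (by rw [h, elt_zero])⟩
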